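/- Let ρ > 0, σ > 0, K > 0, and let p : ℝ → ℝ be even and three times differentiable with c' ≤ p''(x) ≤ C' for all x (for some constants 0 < c' ≤ C') and p'''(x) ≤ 0 for all x ≥ 0. Define g(x) = (σ/√(2ρ)) tanh(√(2ρ) x / σ) and g₁(x) = (p'(x) − K/2)/p''(x). Then the equation g(x) = g₁(x) has exactly one solution on (0, ∞), and this solution is strictly larger than the unique positive zero c₀ of p' − K/2. -/

import Mathlib

private lemma myHasDerivAt_tanh (x : ℝ) :
    HasDerivAt Real.tanh (1 / Real.cosh x ^ 2) x := by
  have hc : Real.cosh x ≠ 0 := ne_of_gt (Real.cosh_pos x)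
  have h : HasDerivAt (fun y => Real.sinh y / Real.cosh y)
      ((Real.cosh x * Real.cosh x - Real.sinh x * Real.sinh x) / Real.cosh x ^ 2) x :=
    (Real.hasDerivAt_sinh x).div (Real.hasDerivAt_cosh x) hc
  have hfun : (fun y => Real.sinh y / Real.cosh y) = Real.tanh := by
    funext y; rw [Real.tanh_eq_sinh_div_cosh]
  have hval : (Real.cosh x * Real.cosh x - Real.sinh x * Real.sinh x) / Real.cosh x ^ 2
      = 1 / Real.cosh x ^ 2 := by
    have := Real.cosh_sq_sub_sinh_sq x
    rw [show Real.cosh x * Real.cosh x - Real.sinh x * Real.sinh x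
        = Real.cosh x ^ 2 - Real.sinh x ^ 2 by ring, this]
  rwa [hfun, hval] at h

private lemma myTanh_pos {x : ℝ} (hx : 0 < x) : 0 < Real.tanh x := by
  rw [Real.tanh_eq_sinh_div_cosh]
  exact div_pos (Real.sinh_pos_iff.mpr hx) (Real.cosh_pos x)

/-- Existence and uniqueness of the free-boundary threshold: the equation
`(σ/√(2ρ)) tanh(√(2ρ)x/σ) = (p'(x) − K/2)/p''(x)` has exactly one solution on `(0, ∞)`,
and this solution lies strictly beyond the unique positive zero `c₀` of `p' − K/2`. -/
theorem free_boundary_threshold_exists_unique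
    (ρ σ K : ℝ) (hρ : 0 < ρ) (hσ : 0 < σ) (hK : 0 < K)
    (p : ℝ → ℝ) (heven : ∀ x, p (-x) = p x)
    (hd1 : Differentiable ℝ p) (hd2 : Differentiable ℝ (deriv p))
    (hd3 : Differentiable ℝ (deriv (deriv p)))
    (c' C' : ℝ) (hc' : 0 < c') (hc'C' : c' ≤ C')
    (hpp : ∀ x, c' ≤ deriv (deriv p) x ∧ deriv (deriv p) x ≤ C')
    (hppp : ∀ x ≥ (0:ℝ), deriv (deriv (deriv p)) x ≤ 0)
    (g g₁ : ℝ → ℝ)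
    (hg : ∀ x, g x = σ / Real.sqrt (2 * ρ) * Real.tanh (Real.sqrt (2 * ρ) * x / σ))
    (hg₁ : ∀ x, g₁ x = (deriv p x - K / 2) / deriv (deriv p) x)
    (c₀ : ℝ) (hc₀pos : 0 < c₀) (hc₀ : deriv p c₀ = K / 2)
    (hc₀uniq : ∀ y : ℝ, 0 < y → deriv p y = K / 2 → y = c₀) :
    (∃! x : ℝ, 0 < x ∧ g x = g₁ x) ∧
    (∀ x : ℝ, 0 < x → g x = g₁ x → c₀ < x) := by
  have h2ρ : (0:ℝ) < 2 * ρ := by linarith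
  have hs : 0 < Real.sqrt (2 * ρ) := Real.sqrt_pos.mpr h2ρ
  set s := Real.sqrt (2 * ρ) with hsdef
  set a := σ / s with hadef
  set b := s / σ with hbdef
  have ha : 0 < a := div_pos hσ hs
  have hb : 0 < b := div_pos hs hσ
  have hab : a * b = 1 := by rw [hadef, hbdef]; field_simp
  -- rewrite g, g₁ as concrete functions
  have hgE : g = fun x => a * Real.tanh (b * x) := by
    funext x; rw [hg x]
    congr 2
    rw [hbdef]; ring
  have hg₁E : g₁ = fun x => (deriv p x - K / 2) / deriv (deriv p) x := funext hg₁
  subst hgE hg₁E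
  -- basic facts about p
  have hvpos : ∀ x, 0 < deriv (deriv p) x := fun x => lt_of_lt_of_le hc' (hpp x).1
  have hmono : StrictMono (deriv p) := strictMono_of_deriv_pos hvpos
  -- g positive on positives, ≤ a everywhere is not needed; g < a
  have hgpos : ∀ x : ℝ, 0 < x → 0 < a * Real.tanh (b * x) := fun x hx =>
    mul_pos ha (myTanh_pos (mul_pos hb hx))
  have htanh_lt_one : ∀ t : ℝ, Real.tanh t < 1 := by
    intro t
    rw [Real.tanh_eq_sinh_div_cosh, div_lt_one (Real.cosh_pos t)]
    nlinarith [Real.cosh_sq_sub_sinh_sq t, Real.cosh_pos t, sq_nonneg (Real.sinh t)]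
  -- part 2 : any positive solution is > c₀
  have part2 : ∀ x : ℝ, 0 < x →
      a * Real.tanh (b * x) = (deriv p x - K / 2) / deriv (deriv p) x → c₀ < x := by
    intro x hx hsol
    by_contra hle
    push_neg at hle
    have h1 : deriv p x ≤ K / 2 := by
      rcases eq_or_lt_of_le hle with h | h
      · rw [h, hc₀]
      · exact le_of_lt (hc₀ ▸ hmono h)
    have h2 : (deriv p x - K / 2) / deriv (deriv p) x ≤ 0 :=
      div_nonpos_of_nonpos_of_nonneg (by linarith) (le_of_lt (hvpos x))
    exact absurd hsol (ne_of_gt (lt_of_le_of_lt h2 (hgpos x hx)))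
  -- derivatives of g and g₁
  have hgderiv : ∀ x : ℝ, HasDerivAt (fun x => a * Real.tanh (b * x))
      (a * b * (1 / Real.cosh (b * x) ^ 2)) x := by
    intro x
    have h1 : HasDerivAt (fun x : ℝ => b * x) b x := by
      simpa using (hasDerivAt_id x).const_mul b
    have h2 := (myHasDerivAt_tanh (b * x)).comp x h1
    have h3 := h2.const_mul a
    exact h3.congr_deriv (by ring)
  have hg₁deriv : ∀ x : ℝ, HasDerivAt (fun x => (deriv p x - K / 2) / deriv (deriv p) x)
      ((deriv (deriv p) x * deriv (deriv p) x
        - (deriv p x - K / 2) * deriv (deriv (deriv p)) x) / deriv (deriv p) x ^ 2) x := by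
    intro x
    exact (((hd2 x).hasDerivAt).sub_const (K / 2)).div ((hd3 x).hasDerivAt)
      (ne_of_gt (hvpos x))
  set F : ℝ → ℝ := fun x => a * Real.tanh (b * x) - (deriv p x - K / 2) / deriv (deriv p) x
    with hFdef
  have hFderiv : ∀ x : ℝ, HasDerivAt F
      (a * b * (1 / Real.cosh (b * x) ^ 2)
        - (deriv (deriv p) x * deriv (deriv p) x
          - (deriv p x - K / 2) * deriv (deriv (deriv p)) x) / deriv (deriv p) x ^ 2) x :=
    fun x => (hgderiv x).sub (hg₁deriv x)
  have hFcont : Continuous F := by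
    have : Differentiable ℝ F := fun x => (hFderiv x).differentiableAt
    exact this.continuous
  -- F strictly decreasing on [c₀, ∞)
  have hFanti : StrictAntiOn F (Set.Ici c₀) := by
    apply strictAntiOn_of_deriv_neg (convex_Ici c₀) hFcont.continuousOn
    intro x hx
    rw [interior_Ici] at hx
    rw [(hFderiv x).deriv]
    have hx0 : 0 < x := lt_trans hc₀pos hx
    -- g' < 1
    have hcosh : 1 < Real.cosh (b * x) := Real.one_lt_cosh.mpr (ne_of_gt (mul_pos hb hx0))
    have hgd : a * b * (1 / Real.cosh (b * x) ^ 2) < 1 := by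
      rw [hab, one_mul, div_lt_one (by positivity)]
      nlinarith
    -- g₁' ≥ 1
    have hu : 0 ≤ deriv p x - K / 2 := by
      have := hmono hx; rw [hc₀] at this; linarith
    have hw : deriv (deriv (deriv p)) x ≤ 0 := hppp x (le_of_lt hx0)
    have hv := hvpos x
    have hg₁d : (1:ℝ) ≤ (deriv (deriv p) x * deriv (deriv p) x
        - (deriv p x - K / 2) * deriv (deriv (deriv p)) x) / deriv (deriv p) x ^ 2 := by
      rw [le_div_iff₀ (by positivity)]
      nlinarith
    linarith
  -- F c₀ > 0
  have hFc₀ : 0 < F c₀ := by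
    have : (deriv p c₀ - K / 2) / deriv (deriv p) c₀ = 0 := by rw [hc₀]; simp
    simpa [hFdef, this] using hgpos c₀ hc₀pos
  -- F M < 0 for M large
  set M : ℝ := c₀ + C' * (a + 1) / c' with hMdef
  have hC' : 0 < C' := lt_of_lt_of_le hc' hc'C'
  have hMc₀ : c₀ < M := by
    calc c₀ < c₀ + C' * (a + 1) / c' := by
              have : 0 < C' * (a + 1) / c' := by positivity
              linarith
      _ = M := hMdef.symm
  have hFM : F M < 0 := by
    -- deriv p M ≥ K/2 + c' * (M - c₀) by MVT on deriv p - c' * x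
    have hq : MonotoneOn (fun x => deriv p x - c' * x) (Set.Icc c₀ M) := by
      apply monotoneOn_of_deriv_nonneg (convex_Icc _ _)
      · exact (Continuous.sub (hd2.continuous) (continuous_const.mul continuous_id)).continuousOn
      · intro x _
        exact ((hd2 x).sub ((differentiable_const c').mul differentiable_id x)).differentiableWithinAt
      · intro x _
        have h1 : HasDerivAt (fun x => deriv p x - c' * x) (deriv (deriv p) x - c') x := by
          have := ((hd2 x).hasDerivAt).sub (by simpa using (hasDerivAt_id x).const_mul c')
          simpa [Pi.sub_def] using this
        rw [h1.deriv]
        linarith [(hpp x).1]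
    have hkey : deriv p c₀ - c' * c₀ ≤ deriv p M - c' * M :=
      hq (Set.left_mem_Icc.mpr (le_of_lt hMc₀)) (Set.right_mem_Icc.mpr (le_of_lt hMc₀))
        (le_of_lt hMc₀)
    have hpM : K / 2 + c' * (M - c₀) ≤ deriv p M := by rw [← hc₀]; linarith
    have hMsub : c' * (M - c₀) = C' * (a + 1) := by
      rw [hMdef]; field_simp; ring
    have hg₁M : a + 1 ≤ (deriv p M - K / 2) / deriv (deriv p) M := by
      rw [le_div_iff₀ (hvpos M)]
      have h1 : deriv (deriv p) M ≤ C' := (hpp M).2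
      have h2 : C' * (a + 1) ≤ deriv p M - K / 2 := by rw [← hMsub]; linarith
      nlinarith [hvpos M, ha]
    have hgM : a * Real.tanh (b * M) < a := by
      nlinarith [htanh_lt_one (b * M)]
    simp only [hFdef]
    linarith
  -- existence via IVT
  obtain ⟨x₀, hx₀mem, hx₀⟩ : ∃ x₀ ∈ Set.Ioo c₀ M, F x₀ = 0 := by
    have := intermediate_value_Ioo' (le_of_lt hMc₀) hFcont.continuousOn
      (a := c₀) (b := M) (Set.mem_Ioo.mpr ⟨hFM, hFc₀⟩)
    obtain ⟨x₀, hmem, hval⟩ := this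
    exact ⟨x₀, hmem, hval⟩
  have hx₀pos : 0 < x₀ := lt_trans hc₀pos hx₀mem.1
  have hx₀sol : a * Real.tanh (b * x₀) = (deriv p x₀ - K / 2) / deriv (deriv p) x₀ := by
    have : F x₀ = 0 := hx₀
    simp only [hFdef] at this
    linarith
  refine ⟨⟨x₀, ⟨hx₀pos, hx₀sol⟩, ?_⟩, part2⟩
  rintro y ⟨hy, hysol⟩
  have hy₁ : c₀ < y := part2 y hy hysol
  have hx₀₁ : c₀ < x₀ := hx₀mem.1
  have hFy : F y = 0 := by simp only [hFdef]; linarith [hysol]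
  exact hFanti.injOn (Set.mem_Ici.mpr (le_of_lt hy₁)) (Set.mem_Ici.mpr (le_of_lt hx₀₁))
    (by rw [hFy, hx₀])
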